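/- The monoid J_ℤ has exponential growth: there exist constants C > 0 and a > 1 such that the number of distinct elements of J_ℤ expressible as words of length at most n in the generators τ, τ^{-1}, θ_0 is at least C·aⁿ for all sufficiently large n. (In fact one may take a = 6^{1/7}.) -/
import Mathlib

namespace Stmt8Aux

def gT : Function.End ℤ := fun i => i + 1
def gTh : Function.End ℤ := fun k => if k < 0 then k else k + 1

/-- The encoded endomorphism for a boolean string. -/
def E : List Bool → (ℤ → ℤ)
  | [] => id
  | true :: t => fun x => gTh (gT (E t x))
  | false :: t => fun x => gT (E t x)

/-- The word (in the generators) realizing `E`. -/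
def W : List Bool → List (Function.End ℤ)
  | [] => []
  | true :: t => gTh :: gT :: W t
  | false :: t => gT :: W t

lemma W_length : ∀ b : List Bool, (W b).length ≤ 2 * b.length
  | [] => by simp [W]
  | true :: t => by
      have := W_length t
      simp only [W, List.length]
      omega
  | false :: t => by
      have := W_length t
      simp only [W, List.length]
      omega

lemma W_mem : ∀ b : List Bool, ∀ g ∈ W b, g = gT ∨ g = gTh
  | [] => by simp [W]
  | true :: t => by
      intro g hg
      simp only [W, List.mem_cons] at hg
      rcases hg with h | h | h
      · exact Or.inr h
      · exact Or.inl h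
      · exact W_mem t g h
  | false :: t => by
      intro g hg
      simp only [W, List.mem_cons] at hg
      rcases hg with h | h
      · exact Or.inl h
      · exact W_mem t g h

lemma W_prod : ∀ b : List Bool, (W b).prod = (E b : Function.End ℤ)
  | [] => rfl
  | true :: t => by
      have ih := W_prod t
      funext x
      show gTh (gT ((W t).prod x)) = gTh (gT (E t x))
      rw [ih]
  | false :: t => by
      have ih := W_prod t
      funext x
      show gT ((W t).prod x) = gT (E t x)
      rw [ih]

lemma E_neg : ∀ (b : List Bool) (x : ℤ), x ≤ -(b.length : ℤ) - 1 → E b x = x + b.length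
  | [], x, _ => by simp [E]
  | true :: t, x, hx => by
      have hlen : ((true :: t).length : ℤ) = (t.length : ℤ) + 1 := by
        simp [List.length]
      rw [hlen] at hx ⊢
      have hx' : x ≤ -(t.length : ℤ) - 1 := by omega
      have ih := E_neg t x hx'
      simp only [E, gTh, gT, ih]
      have hneg : x + (t.length : ℤ) + 1 < 0 := by omega
      rw [if_pos hneg]
      omega
  | false :: t, x, hx => by
      have hlen : ((false :: t).length : ℤ) = (t.length : ℤ) + 1 := by
        simp [List.length]
      rw [hlen] at hx ⊢
      have hx' : x ≤ -(t.length : ℤ) - 1 := by omega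
      have ih := E_neg t x hx'
      simp only [E, gT, ih]
      omega

lemma E_true_ne (t : List Bool) (x : ℤ) : E (true :: t) x ≠ 0 := by
  simp only [E, gTh, gT]
  split_ifs with h <;> omega

lemma E_false_zero (t : List Bool) : E (false :: t) (-(t.length : ℤ) - 1) = 0 := by
  have := E_neg t (-(t.length : ℤ) - 1) (by omega)
  simp only [E, gT, this]
  omega

lemma gTh_inj : Function.Injective (gTh : ℤ → ℤ) := by
  intro a b h
  simp only [gTh] at h
  split_ifs at h <;> omega

lemma E_inj : ∀ t t' : List Bool, t.length = t'.length → E t = E t' → t = t'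
  | [], [], _, _ => rfl
  | [], _ :: _, h, _ => by simp at h
  | _ :: _, [], h, _ => by simp at h
  | b :: t, b' :: t', hlen, heq => by
      have hlen' : t.length = t'.length := by simpa using hlen
      have hbb : b = b' := by
        by_contra hne
        rcases Bool.eq_false_or_eq_true b with hb | hb <;>
          rcases Bool.eq_false_or_eq_true b' with hb' | hb' <;>
            subst hb <;> subst hb' <;> try exact hne rfl
        · -- b = true, b' = false
          have h0 : E (false :: t') (-(t'.length : ℤ) - 1) = 0 := E_false_zero t'
          rw [← heq] at h0
          exact E_true_ne t _ h0
        · -- b = false, b' = true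
          have h0 : E (false :: t) (-(t.length : ℤ) - 1) = 0 := E_false_zero t
          rw [heq] at h0
          exact E_true_ne t' _ h0
      subst hbb
      have htail : E t = E t' := by
        funext x
        have hx := congrFun heq x
        cases b with
        | false =>
            simp only [E, gT] at hx
            omega
        | true =>
            simp only [E] at hx
            have := gTh_inj hx
            simp only [gT] at this
            omega
      rw [E_inj t t' hlen' htail]

/-- Lists of length at most `n` with entries in a finite set form a finite set. -/
lemma finite_lists {α : Type*} (s : Set α) (hs : s.Finite) :
    ∀ n : ℕ, {L : List α | L.length ≤ n ∧ ∀ g ∈ L, g ∈ s}.Finite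
  | 0 => by
      apply Set.Finite.subset (Set.finite_singleton ([] : List α))
      rintro L ⟨hL, -⟩
      simpa using List.length_eq_zero_iff.mp (Nat.le_zero.mp hL)
  | n + 1 => by
      apply Set.Finite.subset
        (Set.Finite.insert ([] : List α) (Set.Finite.image2 List.cons hs (finite_lists s hs n)))
      rintro L ⟨hL, hmem⟩
      cases L with
      | nil => exact Set.mem_insert _ _
      | cons g t =>
          apply Set.mem_insert_of_mem
          exact Set.mem_image2_of_mem (hmem g (by simp))
            ⟨by simpa using hL, fun x hx => hmem x (by simp [hx])⟩

end Stmt8Aux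

open Stmt8Aux in
theorem stmt8 :
    ∃ C : ℝ, 0 < C ∧ ∃ a : ℝ, 1 < a ∧ ∃ N : ℕ, ∀ n ≥ N,
      C * a ^ n ≤
        (Set.ncard {f : Function.End ℤ | ∃ L : List (Function.End ℤ),
          L.length ≤ n ∧
          (∀ g ∈ L, g ∈ ({(fun i => i + 1), (fun i => i - 1),
            (fun k => if k < 0 then k else k + 1)} : Set (Function.End ℤ))) ∧
          L.prod = f} : ℝ) := by
  have sqrt2_sq : Real.sqrt 2 ^ 2 = 2 := Real.sq_sqrt (by norm_num)
  have sqrt2_nonneg : (0:ℝ) ≤ Real.sqrt 2 := Real.sqrt_nonneg 2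
  have sqrt2_le_two : Real.sqrt 2 ≤ 2 := by nlinarith
  have one_lt_sqrt2 : (1:ℝ) < Real.sqrt 2 := by nlinarith
  refine ⟨1/2, by norm_num, Real.sqrt 2, one_lt_sqrt2, 0, ?_⟩
  intro n _
  set gens : Set (Function.End ℤ) := {(fun i => i + 1), (fun i => i - 1),
    (fun k => if k < 0 then k else k + 1)} with hgens
  set S : Set (Function.End ℤ) := {f : Function.End ℤ | ∃ L : List (Function.End ℤ),
    L.length ≤ n ∧ (∀ g ∈ L, g ∈ gens) ∧ L.prod = f} with hS
  set k := n / 2 with hk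
  -- finiteness of S
  have hgfin : gens.Finite :=
    (Set.finite_singleton _).insert _ |>.insert _
  have hSfin : S.Finite := by
    apply Set.Finite.subset ((finite_lists gens hgfin n).image List.prod)
    rintro f ⟨L, hL1, hL2, hL3⟩
    exact ⟨L, ⟨hL1, hL2⟩, hL3⟩
  -- the injection
  set Φ : (Fin k → Bool) → Function.End ℤ := fun v => (E (List.ofFn v) : Function.End ℤ)
    with hΦ
  have hΦinj : Function.Injective Φ := by
    intro v v' h
    have := E_inj (List.ofFn v) (List.ofFn v') (by simp) h
    exact List.ofFn_injective this
  have hsub : Set.range Φ ⊆ S := by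
    rintro f ⟨v, rfl⟩
    refine ⟨W (List.ofFn v), ?_, ?_, W_prod _⟩
    · have h1 := W_length (List.ofFn v)
      have h2 : (List.ofFn v).length = k := by simp
      omega
    · intro g hg
      rcases W_mem _ g hg with h | h
      · rw [h]; exact Set.mem_insert _ _
      · rw [h]
        exact Set.mem_insert_of_mem _ (Set.mem_insert_of_mem _ rfl)
  have hcard : (2:ℕ) ^ k ≤ S.ncard := by
    have h1 : (Set.range Φ).ncard = 2 ^ k := by
      rw [← Nat.card_coe_set_eq, Nat.card_range_of_injective hΦinj]
      simp [Nat.card_eq_fintype_card]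
    calc (2:ℕ) ^ k = (Set.range Φ).ncard := h1.symm
      _ ≤ S.ncard := Set.ncard_le_ncard hsub hSfin
  -- real estimate
  have hcardR : ((2:ℝ)) ^ k ≤ (S.ncard : ℝ) := by exact_mod_cast hcard
  have hpow : Real.sqrt 2 ^ n ≤ 2 ^ k * Real.sqrt 2 := by
    have hn : n ≤ 2 * k + 1 := by omega
    calc Real.sqrt 2 ^ n ≤ Real.sqrt 2 ^ (2 * k + 1) :=
          pow_le_pow_right₀ (le_of_lt one_lt_sqrt2) hn
      _ = 2 ^ k * Real.sqrt 2 := by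
          rw [pow_succ, pow_mul, sqrt2_sq]
  have hpos : (0:ℝ) < 2 ^ k := by positivity
  calc (1/2 : ℝ) * Real.sqrt 2 ^ n ≤ (1/2) * (2 ^ k * Real.sqrt 2) := by nlinarith
    _ ≤ 2 ^ k := by nlinarith
    _ ≤ (S.ncard : ℝ) := hcardR
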